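/- Let n ≥ 1 and m ≥ 2. Let z_1,…,z_n and z^1,…,z^m be real-valued functions on ℝⁿ × ℝᵐ × ℝ^{m×n} (with points written (x, w, W), W = (w^j_i), j = 1,…,m, i = 1,…,n), where each z^j is twice continuously differentiable and each z_i is continuously differentiable. Assume: (a) ∂z^j/∂w^k_i = 0 for all i and all j ≠ k, and (b) ∂z^j/∂w^j_i = −z_i for all i and all j. Then every z_i is independent of the W-variables (i.e. ∂z_i/∂w^k_{i'} = 0 for all k, i'), and for every j the function z^j + Σ_{i=1}^n w^j_i z_i is independent of the W-variables. -/

import Mathlib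

/-!
Coordinate core of the Lie–Bäcklund theorem (Theorem 5.1): if the coefficients
`z_i`, `z^j` of a variation preserving the zeroth order contact forms satisfy
`∂z^j/∂w^k_i = 0` for `j ≠ k` and `∂z^j/∂w^j_i = -z_i`, then the `z_i` and the
functions `z^j + Σ_i w^j_i z_i` do not depend on the first-order jet
variables `W = (w^j_i)`.
-/

noncomputable section

open scoped BigOperators

/-- A point of `ℝⁿ × ℝᵐ × ℝ^{m×n}`, written `(x, w, W)`. -/
abbrev JetPt (n m : ℕ) := (Fin n → ℝ) × (Fin m → ℝ) × (Fin m → Fin n → ℝ)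

/-- The partial derivative `∂f/∂w^j_i` with respect to the jet variable
`w^j_i` (the `(j,i)` entry of the `W`-component). -/
def pdW {n m : ℕ} (j : Fin m) (i : Fin n) (f : JetPt n m → ℝ) (p : JetPt n m) : ℝ :=
  fderiv ℝ f p (0, 0, Pi.single j (Pi.single i 1))

/-- The direction vector of `w^k_i`. -/
def eW {n m : ℕ} (k : Fin m) (i : Fin n) : JetPt n m := (0, 0, Pi.single k (Pi.single i 1))

lemma pdW_eq {n m : ℕ} (k : Fin m) (i : Fin n) (f : JetPt n m → ℝ) (p : JetPt n m) :
    pdW k i f p = fderiv ℝ f p (eW k i) := rfl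

/-- The coordinate map `q ↦ q.2.2 j i` as a continuous linear map. -/
def coordCLM {n m : ℕ} (j : Fin m) (i : Fin n) : JetPt n m →L[ℝ] ℝ :=
  ((ContinuousLinearMap.proj (R := ℝ) (φ := fun _ : Fin n => ℝ) i).comp
    (ContinuousLinearMap.proj (R := ℝ) (φ := fun _ : Fin m => Fin n → ℝ) j)).comp
    ((ContinuousLinearMap.snd ℝ (Fin m → ℝ) (Fin m → Fin n → ℝ)).comp
      (ContinuousLinearMap.snd ℝ (Fin n → ℝ) ((Fin m → ℝ) × (Fin m → Fin n → ℝ))))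

@[simp] lemma coordCLM_apply {n m : ℕ} (j : Fin m) (i : Fin n) (q : JetPt n m) :
    coordCLM j i q = q.2.2 j i := rfl

/-- Differentiating a directional derivative of a `C²` function gives the second
derivative applied to the two directions. -/
lemma fderiv_fderiv_apply {n m : ℕ} {f : JetPt n m → ℝ} (hf : ContDiff ℝ 2 f)
    (v w : JetPt n m) (p : JetPt n m) :
    fderiv ℝ (fun q => fderiv ℝ f q v) p w = fderiv ℝ (fderiv ℝ f) p w v := by
  have hf' : ContDiff ℝ 1 (fderiv ℝ f) := hf.fderiv_right (by norm_num)
  have hd : HasFDerivAt (fderiv ℝ f) (fderiv ℝ (fderiv ℝ f) p) p :=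
    (hf'.differentiable one_ne_zero p).hasFDerivAt
  have h2 : HasFDerivAt (fun q => fderiv ℝ f q v)
      ((ContinuousLinearMap.apply ℝ ℝ v).comp (fderiv ℝ (fderiv ℝ f) p)) p :=
    (ContinuousLinearMap.apply ℝ ℝ v).hasFDerivAt.comp p hd
  rw [h2.fderiv]
  rfl

/-- Symmetry of the second derivative for `C²` functions. -/
lemma second_symm {n m : ℕ} {f : JetPt n m → ℝ} (hf : ContDiff ℝ 2 f)
    (p v w : JetPt n m) :
    fderiv ℝ (fderiv ℝ f) p v w = fderiv ℝ (fderiv ℝ f) p w v :=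
  second_derivative_symmetric
    (fun y => (hf.differentiable (by norm_num) y).hasFDerivAt)
    (((hf.fderiv_right (by norm_num : (1 : WithTop ℕ∞) + 1 ≤ 2)).differentiable one_ne_zero p).hasFDerivAt) v w

/-- Lie–Bäcklund: let `n ≥ 1`, `m ≥ 2`, let `z_i` be `C¹` and `z^j` be `C²`
functions on `ℝⁿ × ℝᵐ × ℝ^{m×n}` with `∂z^j/∂w^k_i = 0` for all `i` and all
`j ≠ k`, and `∂z^j/∂w^j_i = -z_i` for all `i, j`.  Then every `z_i` is
independent of the `W`-variables, and for every `j` the function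
`z^j + Σ_i w^j_i z_i` is independent of the `W`-variables. -/
theorem lie_backlund_point_symmetry (n m : ℕ) (hn : 1 ≤ n) (hm : 2 ≤ m)
    (zLow : Fin n → JetPt n m → ℝ) (zUp : Fin m → JetPt n m → ℝ)
    (hzUp : ∀ j, ContDiff ℝ 2 (zUp j))
    (hzLow : ∀ i, ContDiff ℝ 1 (zLow i))
    (ha : ∀ (i : Fin n) (j k : Fin m), j ≠ k → ∀ p, pdW k i (zUp j) p = 0)
    (hb : ∀ (i : Fin n) (j : Fin m) (p : JetPt n m),
      pdW j i (zUp j) p = -zLow i p) :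
    (∀ (i : Fin n) (k : Fin m) (i' : Fin n) (p : JetPt n m),
        pdW k i' (zLow i) p = 0)
    ∧ ∀ (j k : Fin m) (i' : Fin n) (p : JetPt n m),
        pdW k i' (fun q => zUp j q + ∑ i, q.2.2 j i * zLow i q) p = 0 := by
  haveI : Nontrivial (Fin m) := Fin.nontrivial_iff_two_le.mpr hm
  have key : ∀ (i : Fin n) (k : Fin m) (i' : Fin n) (p : JetPt n m),
      pdW k i' (zLow i) p = 0 := by
    intro i k i' p
    obtain ⟨j, hjk⟩ := exists_ne k
    have hzl : zLow i = fun q => -(fderiv ℝ (zUp j) q (eW j i)) := by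
      funext q
      have := hb i j q
      rw [pdW_eq] at this
      linarith
    rw [pdW_eq, hzl, fderiv_fun_neg, ContinuousLinearMap.neg_apply,
      fderiv_fderiv_apply (hzUp j), second_symm (hzUp j),
      ← fderiv_fderiv_apply (hzUp j)]
    have hz0 : (fun q => fderiv ℝ (zUp j) q (eW k i')) = fun _ => (0 : ℝ) := by
      funext q
      have := ha i' j k hjk q
      rwa [pdW_eq] at this
    rw [hz0]
    simp
  refine ⟨key, ?_⟩
  intro j k i' p
  have hL : ∀ i : Fin n, HasFDerivAt (zLow i) (fderiv ℝ (zLow i) p) p :=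
    fun i => ((hzLow i).differentiable one_ne_zero p).hasFDerivAt
  have hU : HasFDerivAt (zUp j) (fderiv ℝ (zUp j) p) p :=
    ((hzUp j).differentiable (by norm_num) p).hasFDerivAt
  have hg : HasFDerivAt (fun q => zUp j q + ∑ i, q.2.2 j i * zLow i q)
      (fderiv ℝ (zUp j) p
        + ∑ i, (p.2.2 j i • fderiv ℝ (zLow i) p + zLow i p • coordCLM j i)) p := by
    refine hU.add (HasFDerivAt.fun_sum fun i _ => ?_)
    have hc : HasFDerivAt (fun q : JetPt n m => q.2.2 j i) (coordCLM j i) p :=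
      (coordCLM j i).hasFDerivAt
    exact hc.mul (hL i)
  rw [pdW_eq, hg.fderiv]
  simp only [ContinuousLinearMap.add_apply, ContinuousLinearMap.coe_sum',
    Finset.sum_apply, ContinuousLinearMap.smul_apply, smul_eq_mul]
  have hkey : ∀ i : Fin n, fderiv ℝ (zLow i) p (eW k i') = 0 := by
    intro i
    have := key i k i' p
    rwa [pdW_eq] at this
  have hcoord : ∀ i : Fin n, coordCLM j i (eW k i') = if j = k ∧ i = i' then 1 else 0 := by
    intro i
    show (Pi.single k (Pi.single i' (1 : ℝ)) : Fin m → Fin n → ℝ) j i = _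
    rw [Pi.single_apply]
    by_cases h1 : j = k
    · rw [if_pos h1, Pi.single_apply]
      by_cases h2 : i = i' <;> simp [h1, h2]
    · simp [h1]
  have hsum : ∑ i, (p.2.2 j i * fderiv ℝ (zLow i) p (eW k i')
      + zLow i p * coordCLM j i (eW k i'))
      = if j = k then zLow i' p else 0 := by
    rw [Finset.sum_congr rfl (fun i _ => by rw [hkey i, hcoord i, mul_zero, zero_add])]
    by_cases h1 : j = k
    · simp only [h1, true_and, mul_ite, mul_one, mul_zero]
      simp
    · simp [h1]
  rw [hsum]
  by_cases h1 : j = k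
  · subst h1
    have := hb i' j p
    rw [pdW_eq] at this
    rw [this]
    simp
  · have := ha i' j k h1 p
    rw [pdW_eq] at this
    rw [this]
    simp [h1]

end
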